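/- Let Y₁, Y₂ be the vector fields on ℝ² given by Y₁ = ∂₁ + f(x₁)∂₂ and Y₂ = |x₂ − F(x₁)|∂₂, where F(x₁) = x₁|x₁| and f(x₁) = 2|x₁|. Then Y₁ and Y₂ are Lipschitz, [Y₁,Y₂] = 0 almost everywhere, and the orbit of the origin is exactly the graph {x ∈ ℝ² : x₂ = F(x₁)}, which is a one-dimensional C^{1,1} submanifold of ℝ². -/

import Mathlib

open MeasureTheory Set

noncomputable section

/-- a.e.-defined bracket of Lipschitz vector fields. -/
def vbracket {n : ℕ} (f g : (Fin n → ℝ) → (Fin n → ℝ)) (x : Fin n → ℝ) : Fin n → ℝ :=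
  fderiv ℝ g x (f x) - fderiv ℝ f x (g x)

/-- `γ` is a subunit path for the family `Y` on `[0,T]`. -/
def IsSubunitPath {n q : ℕ} (Y : Fin q → (Fin n → ℝ) → (Fin n → ℝ))
    (T : ℝ) (γ : ℝ → (Fin n → ℝ)) : Prop :=
  (∃ L, LipschitzOnWith L γ (Set.Icc 0 T)) ∧
  ∃ u : ℝ → Fin q → ℝ,
    ∀ᵐ t ∂(volume.restrict (Set.Icc 0 T)),
      Real.sqrt (∑ j, u t j ^ 2) ≤ 1 ∧
      HasDerivAt γ (∑ j, u t j • Y j (γ t)) t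

/-- Orbit membership: reachability by a subunit path (finite control distance). -/
def InOrbit {n q : ℕ} (Y : Fin q → (Fin n → ℝ) → (Fin n → ℝ))
    (x y : Fin n → ℝ) : Prop :=
  ∃ T ≥ (0:ℝ), ∃ γ : ℝ → (Fin n → ℝ), IsSubunitPath Y T γ ∧ γ 0 = x ∧ γ T = y

/-- The vector fields `Y₁ = ∂₁ + 2|x₁|∂₂`, `Y₂ = |x₂ − x₁|x₁||∂₂` of Example 2. -/
def Yex : Fin 2 → (Fin 2 → ℝ) → (Fin 2 → ℝ) := fun j x =>
  if j = 0 then ![1, 2 * abs (x 0)] else ![0, abs (x 1 - x 0 * abs (x 0))]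

open Filter Topology

section Helpers


lemma hasDerivAt_mulAbs (s : ℝ) : HasDerivAt (fun s : ℝ => s * |s|) (2 * |s|) s := by
  rcases lt_trichotomy s 0 with hs | rfl | hs
  · have h : (fun s : ℝ => -(s * s)) =ᶠ[nhds s] fun s : ℝ => s * |s| := by
      filter_upwards [eventually_nhds_iff.2 ⟨Iio 0, fun y (hy : y < 0) =>
        show -(y*y) = y * |y| by rw [abs_of_neg hy]; ring, isOpen_Iio, hs⟩] with y hy using hy
    have h2 := (((hasDerivAt_id s).mul (hasDerivAt_id s)).neg).congr_of_eventuallyEq h.symm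
    refine h2.congr_deriv ?_
    simp [abs_of_neg hs]; ring
  · rw [hasDerivAt_iff_tendsto_slope]
    have hs : ∀ y : ℝ, slope (fun s : ℝ => s * |s|) 0 y = |y| := by
      intro y
      rcases eq_or_ne y 0 with rfl | hy
      · simp [slope]
      · simp only [slope, vsub_eq_sub, smul_eq_mul, sub_zero, mul_zero, abs_zero]
        rw [inv_mul_eq_div, mul_comm, mul_div_assoc, div_self hy, mul_one]
    have hse : slope (fun s : ℝ => s * |s|) 0 = abs := funext hs
    rw [hse, abs_zero, mul_zero]
    exact (continuous_abs.tendsto' 0 0 abs_zero).mono_left nhdsWithin_le_nhds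
  · have h : (fun s : ℝ => s * s) =ᶠ[nhds s] fun s : ℝ => s * |s| := by
      filter_upwards [eventually_nhds_iff.2 ⟨Ioi 0, fun y (hy : 0 < y) =>
        show y*y = y * |y| by rw [abs_of_pos hy], isOpen_Ioi, hs⟩] with y hy using hy
    have h2 := ((hasDerivAt_id s).mul (hasDerivAt_id s)).congr_of_eventuallyEq h.symm
    refine h2.congr_deriv ?_
    simp [abs_of_pos hs]; ring

lemma abs_mulAbs_sub (a b : ℝ) : abs (a * |a| - b * |b|) ≤ (|a| + |b|) * |a - b| := by
  have h : a*|a| - b*|b| = a*(|a|-|b|) + (a-b)*|b| := by ring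
  rw [h]
  have h1 := abs_add_le (a*(|a|-|b|)) ((a-b)*|b|)
  have h2 : |a*(|a|-|b|)| = |a| * |(|a|-|b|)| := by rw [abs_mul]
  have h3 : abs ((a-b)*|b|) = |a-b| * |b| := by rw [abs_mul, abs_abs]
  have h4 : |(|a|-|b|)| ≤ |a-b| := abs_abs_sub_abs_le_abs_sub a b
  nlinarith [abs_nonneg a, abs_nonneg b, abs_nonneg (a-b)]

lemma deriv_mulAbs : (deriv fun s : ℝ => s * |s|) = fun s => 2 * |s| :=
  funext fun s => (hasDerivAt_mulAbs s).deriv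

lemma partE : ContDiff ℝ 1 (fun s : ℝ => s * |s|) ∧
    LipschitzWith 2 (deriv fun s : ℝ => s * |s|) := by
  constructor
  · rw [contDiff_one_iff_deriv]
    exact ⟨fun s => (hasDerivAt_mulAbs s).differentiableAt,
      deriv_mulAbs ▸ continuous_const.mul continuous_abs⟩
  · rw [deriv_mulAbs]
    apply LipschitzWith.of_dist_le_mul
    intro a b
    simp only [Real.dist_eq]
    have h4 : |(|a|-|b|)| ≤ |a-b| := abs_abs_sub_abs_le_abs_sub a b
    have h5 : abs (2*|a| - 2*|b|) = 2 * |(|a|-|b|)| := by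
      rw [show (2:ℝ)*|a| - 2*|b| = 2*(|a|-|b|) by ring, abs_mul]
      norm_num
    rw [h5]
    push_cast
    linarith

lemma Yex0_apply (x : Fin 2 → ℝ) : Yex 0 x = ![1, 2 * |x 0|] := by simp [Yex]

lemma partA0 : LipschitzWith 2 (Yex 0) := by
  apply LipschitzWith.of_dist_le_mul
  intro x y
  simp only [Yex0_apply]
  have h2 : ((2:NNReal):ℝ) = 2 := rfl
  rw [h2, dist_pi_le_iff (by positivity)]
  refine Fin.forall_fin_two.2 ⟨?_, ?_⟩
  · simpa using by positivity
  · simp only [Matrix.cons_val_one, Matrix.head_cons, Matrix.cons_val_fin_one, Real.dist_eq]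
    have h1 := abs_abs_sub_abs_le_abs_sub (x 0) (y 0)
    have h2 : |x 0 - y 0| ≤ dist x y := by rw [← Real.dist_eq]; exact dist_le_pi_dist x y 0
    have h3 : abs (2*|x 0| - 2*|y 0|) = 2 * |(|x 0| - |y 0|)| := by
      rw [show (2:ℝ)*|x 0| - 2*|y 0| = 2*(|x 0|-|y 0|) by ring, abs_mul]; norm_num
    rw [h3]
    linarith

lemma Yex1_apply (x : Fin 2 → ℝ) : Yex 1 x = ![0, abs (x 1 - x 0 * |x 0|)] := by simp [Yex]

lemma partA1 : LocallyLipschitz (Yex 1) := by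
  intro x
  refine ⟨Real.toNNReal (2*|x 0| + 3), Metric.ball x 1, Metric.ball_mem_nhds x one_pos, ?_⟩
  rw [lipschitzOnWith_iff_dist_le_mul]
  intro y hy z hz
  rw [Real.coe_toNNReal _ (by positivity)]
  simp only [Yex1_apply]
  have key : ∀ w ∈ Metric.ball x 1, |w 0| ≤ |x 0| + 1 := by
    intro w hw
    have h1 : |w 0 - x 0| ≤ dist w x := by rw [← Real.dist_eq]; exact dist_le_pi_dist w x 0
    have h2 := abs_sub_abs_le_abs_sub (w 0) (x 0)
    have h3 : dist w x < 1 := Metric.mem_ball.1 hw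
    linarith
  have hy0 := key y hy
  have hz0 := key z hz
  rw [dist_pi_le_iff (by positivity)]
  refine Fin.forall_fin_two.2 ⟨?_, ?_⟩
  · simpa using by positivity
  · simp only [Matrix.cons_val_one, Matrix.head_cons, Matrix.cons_val_fin_one, Real.dist_eq]
    have d1 : |y 1 - z 1| ≤ dist y z := by rw [← Real.dist_eq]; exact dist_le_pi_dist y z 1
    have d0 : |y 0 - z 0| ≤ dist y z := by rw [← Real.dist_eq]; exact dist_le_pi_dist y z 0
    set A := y 1 - y 0 * |y 0| with hA
    set B := z 1 - z 0 * |z 0| with hB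
    have h5 := abs_abs_sub_abs_le_abs_sub A B
    have h6 : |A - B| ≤ |y 1 - z 1| + abs (y 0*|y 0| - z 0*|z 0|) := by
      have : A - B = (y 1 - z 1) - (y 0*|y 0| - z 0*|z 0|) := by rw [hA, hB]; ring
      rw [this]
      exact abs_sub _ _
    have h7 := abs_mulAbs_sub (y 0) (z 0)
    have h8 : (|y 0| + |z 0|) * |y 0 - z 0| ≤ (2*|x 0| + 2) * dist y z :=
      mul_le_mul (by linarith) d0 (abs_nonneg _) (by positivity)
    linarith

def P (i : Fin 2) : (Fin 2 → ℝ) →L[ℝ] ℝ := ContinuousLinearMap.proj i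

lemma hasFDerivAt_abs_comp {g : (Fin 2 → ℝ) → ℝ} {x : Fin 2 → ℝ}
    {D : (Fin 2 → ℝ) →L[ℝ] ℝ} (hg : HasFDerivAt g D x) (hgx : g x ≠ 0) :
    HasFDerivAt (fun y => |g y|) ((if 0 < g x then (1:ℝ) else -1) • D) x := by
  rcases hgx.lt_or_gt with h | h
  · rw [if_neg (not_lt.2 h.le)]
    have hev : (fun y => -(g y)) =ᶠ[nhds x] fun y => |g y| := by
      filter_upwards [hg.continuousAt.preimage_mem_nhds (Iio_mem_nhds h)] with y hy
      exact (abs_of_neg hy).symm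
    have h2 := hg.neg.congr_of_eventuallyEq hev.symm
    refine h2.congr_fderiv ?_
    ext v
    simp
  · rw [if_pos h]
    have hev : g =ᶠ[nhds x] fun y => |g y| := by
      filter_upwards [hg.continuousAt.preimage_mem_nhds (Ioi_mem_nhds h)] with y hy
      exact (abs_of_pos hy).symm
    have h2 := hg.congr_of_eventuallyEq hev.symm
    refine h2.congr_fderiv ?_
    simp

section derivs
variable {x : Fin 2 → ℝ}

def L1 (x : Fin 2 → ℝ) : (Fin 2 → ℝ) →L[ℝ] (Fin 2 → ℝ) :=
  ContinuousLinearMap.pi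
    (fun i : Fin 2 => if i = 0 then 0
      else (if 0 < 2 * x 0 then (1:ℝ) else -1) • ((2:ℝ) • P 0))

def L2 (x : Fin 2 → ℝ) : (Fin 2 → ℝ) →L[ℝ] (Fin 2 → ℝ) :=
  ContinuousLinearMap.pi
    (fun i : Fin 2 => if i = 0 then 0
      else (if 0 < x 1 - x 0 * |x 0| then (1:ℝ) else -1) • (P 1 - (2 * |x 0|) • P 0))

lemma hasFDerivAt_Yex0 (hx : x 0 ≠ 0) : HasFDerivAt (Yex 0) (L1 x) x := by
  rw [L1, hasFDerivAt_pi']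
  refine Fin.forall_fin_two.2 ⟨?_, ?_⟩
  · rw [ContinuousLinearMap.proj_pi, if_pos rfl]
    have h : (fun y : Fin 2 → ℝ => Yex 0 y 0) = fun _ => (1:ℝ) := by
      funext y; simp [Yex]
    rw [h]
    exact hasFDerivAt_const _ _
  · rw [ContinuousLinearMap.proj_pi, if_neg (by norm_num)]
    have e1 : (fun y : Fin 2 → ℝ => Yex 0 y 1) = fun y => |2 * y 0| := by
      funext y; simp [Yex, abs_mul]
    rw [e1]
    have hg : HasFDerivAt (fun y : Fin 2 → ℝ => 2 * y 0) ((2:ℝ) • P 0) x := by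
      exact ((P 0).hasFDerivAt (x := x)).const_smul (2:ℝ)
    exact hasFDerivAt_abs_comp hg (by simpa using hx)

lemma hasFDerivAt_Yex1 (hx : x 1 - x 0 * |x 0| ≠ 0) : HasFDerivAt (Yex 1) (L2 x) x := by
  rw [L2, hasFDerivAt_pi']
  refine Fin.forall_fin_two.2 ⟨?_, ?_⟩
  · rw [ContinuousLinearMap.proj_pi, if_pos rfl]
    have h : (fun y : Fin 2 → ℝ => Yex 1 y 0) = fun _ => (0:ℝ) := by
      funext y; simp [Yex]
    rw [h]
    exact hasFDerivAt_const _ _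
  · rw [ContinuousLinearMap.proj_pi, if_neg (by norm_num)]
    have e1 : (fun y : Fin 2 → ℝ => Yex 1 y 1) = fun y => abs (y 1 - y 0 * |y 0|) := by
      funext y; simp [Yex]
    rw [e1]
    have hm : HasFDerivAt (fun y : Fin 2 → ℝ => y 0 * |y 0|) ((2 * |x 0|) • P 0) x :=
      by have h := (hasDerivAt_mulAbs (x 0)).comp_hasFDerivAt x ((P 0).hasFDerivAt (x := x)); exact h
    have hg : HasFDerivAt (fun y : Fin 2 → ℝ => y 1 - y 0 * |y 0|)
        (P 1 - (2 * |x 0|) • P 0) x :=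
      ((P 1).hasFDerivAt).sub hm
    exact hasFDerivAt_abs_comp hg hx

lemma vbracket_zero (hx0 : x 0 ≠ 0) (hx1 : x 1 - x 0 * |x 0| ≠ 0) :
    vbracket (Yex 0) (Yex 1) x = 0 := by
  rw [vbracket, (hasFDerivAt_Yex0 hx0).fderiv, (hasFDerivAt_Yex1 hx1).fderiv]
  funext i
  fin_cases i <;>
    simp [L1, L2, Yex, P, ContinuousLinearMap.pi_apply, ContinuousLinearMap.smul_apply,
      ContinuousLinearMap.sub_apply, ContinuousLinearMap.proj_apply] <;>
    split_ifs <;>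
    simp [ContinuousLinearMap.sub_apply, ContinuousLinearMap.smul_apply,
      ContinuousLinearMap.proj_apply, Matrix.cons_val_one, Matrix.cons_val_zero,
      Matrix.head_cons] <;> ring_nf

end derivs

lemma null_bad : (volume : Measure (Fin 2 → ℝ))
    {x : Fin 2 → ℝ | x 0 = 0 ∨ x 1 - x 0 * |x 0| = 0} = 0 := by
  have e := volume_preserving_finTwoArrow ℝ
  have hfm : Measurable fun a : ℝ => a * |a| := measurable_id.mul measurable_abs
  have hgm : MeasurableSet {p : ℝ × ℝ | p.2 = p.1 * |p.1|} := by
    have := measurableSet_graph hfm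
    simpa using this
  set S : Set (ℝ × ℝ) := {p : ℝ × ℝ | p.1 = 0} ∪ {p : ℝ × ℝ | p.2 = p.1 * |p.1|} with hS
  have hmeas : MeasurableSet S :=
    ((measurableSet_singleton (0:ℝ)).preimage measurable_fst).union hgm
  have hpre : {x : Fin 2 → ℝ | x 0 = 0 ∨ x 1 - x 0 * |x 0| = 0}
      = MeasurableEquiv.finTwoArrow ⁻¹' S := by
    ext x
    simp [S, MeasurableEquiv.finTwoArrow, sub_eq_zero]
  rw [hpre, e.measure_preimage hmeas.nullMeasurableSet]
  have h1 : (volume : Measure (ℝ × ℝ)) {p : ℝ × ℝ | p.1 = 0} = 0 := by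
    have hpr : {p : ℝ × ℝ | p.1 = 0} = ({0} : Set ℝ) ×ˢ (univ : Set ℝ) := by
      ext ⟨a, b⟩; simp [eq_comm]
    rw [hpr, show (volume : Measure (ℝ × ℝ)) = (volume : Measure ℝ).prod volume from rfl,
      Measure.prod_prod]
    simp
  have h2 : (volume : Measure (ℝ × ℝ)) {p : ℝ × ℝ | p.2 = p.1 * |p.1|} = 0 := by
    rw [show (volume : Measure (ℝ × ℝ)) = (volume : Measure ℝ).prod volume from rfl,
      Measure.prod_apply hgm]
    have hz : ∀ a : ℝ, (volume : Measure ℝ) (Prod.mk a ⁻¹' {p : ℝ × ℝ | p.2 = p.1 * |p.1|}) = 0 := by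
      intro a
      have hp : Prod.mk a ⁻¹' {p : ℝ × ℝ | p.2 = p.1 * |p.1|} = {a * |a|} := by
        ext y; simp
      rw [hp]
      exact measure_singleton _
    simp [hz]
  exact le_antisymm ((measure_union_le _ _).trans (by rw [h1, h2]; simp)) zero_le

/-- sequential difference quotient converges for a function with derivative -/
lemma seq_diff_tendsto {g : ℝ → ℝ} {t d : ℝ} (h : HasDerivAt g d t) :
    Tendsto (fun n : ℕ => (g (t + 1/(n+1)) - g t) * (n+1)) atTop (𝓝 d) := by
  have hslope := hasDerivAt_iff_tendsto_slope.1 h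
  have hseq : Tendsto (fun n : ℕ => t + 1/(n+1)) atTop (𝓝[≠] t) := by
    apply tendsto_nhdsWithin_of_tendsto_nhds_of_eventually_within
    · simpa using (tendsto_const_nhds (x := t)).add tendsto_one_div_add_atTop_nhds_zero_nat
    · filter_upwards with n
      have : (0:ℝ) < 1/(n+1) := by positivity
      simp only [mem_compl_iff, mem_singleton_iff]
      intro hc
      nlinarith [add_right_cancel (a := t) (b := 1/((n:ℝ)+1)) (c := 0)]
  have := hslope.comp hseq
  apply this.congr
  intro n
  have hne : (1:ℝ)/(n+1) ≠ 0 := by positivity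
  simp only [Function.comp, slope, vsub_eq_sub, smul_eq_mul]
  rw [add_sub_cancel_left]
  rw [inv_eq_one_div, div_eq_mul_inv, one_div, inv_inv]
  ring

lemma lipschitz_ftc {f : ℝ → ℝ} {L : NNReal} (hf : LipschitzWith L f) {b : ℝ} (hb : 0 ≤ b)
    (hd : ∀ᵐ t ∂(volume.restrict (Ioc 0 b)), HasDerivAt f (deriv f t) t) :
    f b - f 0 = ∫ t in Ioc 0 b, deriv f t := by
  set φ : ℕ → ℝ → ℝ := fun n t => (f (t + 1/(n+1)) - f t) * (n+1) with hφ
  have hcont : Continuous f := hf.continuous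
  have hmeas : ∀ n, AEStronglyMeasurable (φ n) (volume.restrict (Ioc 0 b)) := fun n =>
    (((hcont.comp (continuous_add_right _)).sub hcont).mul continuous_const).aestronglyMeasurable
  have hbound : ∀ n, ∀ᵐ t ∂(volume.restrict (Ioc 0 b)), ‖φ n t‖ ≤ (L:ℝ) := by
    intro n
    filter_upwards with t
    have h1 : |f (t + 1/(n+1)) - f t| ≤ (L:ℝ) * (1/(n+1)) := by
      have h := hf.dist_le_mul (t + 1/(n+1)) t
      rw [Real.dist_eq, Real.dist_eq, add_sub_cancel_left,
        abs_of_pos (show (0:ℝ) < 1/(n+1) by positivity)] at h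
      exact h
    have hn : (0:ℝ) < n+1 := by positivity
    rw [hφ]
    simp only [Real.norm_eq_abs, abs_mul]
    rw [abs_of_pos hn]
    calc |f (t + 1/(n+1)) - f t| * (n+1) ≤ ((L:ℝ) * (1/(n+1))) * (n+1) := by
          apply mul_le_mul_of_nonneg_right h1 hn.le
      _ = (L:ℝ) := by field_simp
  have hlim : ∀ᵐ t ∂(volume.restrict (Ioc 0 b)),
      Tendsto (fun n => φ n t) atTop (𝓝 (deriv f t)) := by
    filter_upwards [hd] with t ht using seq_diff_tendsto ht
  have hdct := tendsto_integral_of_dominated_convergence (fun _ => (L:ℝ)) hmeas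
    (integrable_const _) hbound hlim
  -- compute the integrals of φ n
  set Φ : ℝ → ℝ := fun x => ∫ t in (0:ℝ)..x, f t with hΦ
  have hΦd : ∀ x, HasDerivAt Φ (f x) x := fun x =>
    (hcont.integral_hasStrictDerivAt 0 x).hasDerivAt
  have hInt : ∀ (u v : ℝ) (c : ℝ), IntervalIntegrable (fun t => f (t + c)) volume u v :=
    fun u v c => (hcont.comp (continuous_add_right c)).intervalIntegrable u v
  have hIntf : ∀ u v : ℝ, IntervalIntegrable f volume u v := fun u v =>
    hcont.intervalIntegrable u v
  have hcalc : ∀ n : ℕ, ∫ t in Ioc 0 b, φ n t =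
      (Φ (b + 1/(n+1)) - Φ b) * (n+1) - (Φ (0 + 1/(n+1)) - Φ 0) * (n+1) := by
    intro n
    set c : ℝ := 1/(n+1) with hc
    have h1 : ∫ t in Ioc 0 b, φ n t = ∫ t in (0:ℝ)..b, φ n t := by
      rw [intervalIntegral.integral_of_le hb]
    rw [h1, hφ]
    simp only
    rw [intervalIntegral.integral_mul_const, intervalIntegral.integral_sub (hInt 0 b c) (hIntf 0 b)]
    rw [intervalIntegral.integral_comp_add_right (fun t => f t) c]
    have h2 : (∫ t in (0+c)..(b+c), f t) = Φ (b+c) - Φ (0+c) := by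
      rw [hΦ]
      simp only
      rw [← intervalIntegral.integral_interval_sub_left (hIntf 0 (b+c)) (hIntf 0 (0+c))]
    rw [h2]
    have h3 : Φ 0 = 0 := by simp [hΦ]
    have h4 : Φ b = ∫ t in (0:ℝ)..b, f t := rfl
    rw [h3, ← h4]
    ring
  have hlim2 : Tendsto (fun n : ℕ => ∫ t in Ioc 0 b, φ n t) atTop (𝓝 (f b - f 0)) := by
    simp only [hcalc]
    have t1 : Tendsto (fun n : ℕ => (Φ (b + 1/(n+1)) - Φ b) * (n+1)) atTop (𝓝 (f b)) :=
      seq_diff_tendsto (hΦd b)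
    have t2 : Tendsto (fun n : ℕ => (Φ (0 + 1/(n+1)) - Φ 0) * (n+1)) atTop (𝓝 (f 0)) :=
      seq_diff_tendsto (hΦd 0)
    exact t1.sub t2
  exact (tendsto_nhds_unique hdct hlim2).symm

lemma lipschitz_vanish {f : ℝ → ℝ} {L : NNReal} (hf : LipschitzWith L f) {b : ℝ} (hb : 0 ≤ b)
    (h0 : f 0 = 0)
    (hd : ∀ᵐ t ∂(volume.restrict (Ioc 0 b)),
      HasDerivAt f (deriv f t) t ∧ |deriv f t| ≤ |f t|) :
    f b = 0 := by
  have hcont : Continuous f := hf.continuous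
  -- FTC at every t in [0, b]
  have key : ∀ t ∈ Icc 0 b, f t = ∫ s in Ioc 0 t, deriv f s := by
    rintro t ⟨ht0, htb⟩
    have hsub : Ioc 0 t ⊆ Ioc 0 b := Ioc_subset_Ioc_right htb
    have hd' : ∀ᵐ s ∂(volume.restrict (Ioc 0 t)), HasDerivAt f (deriv f s) s := by
      filter_upwards [ae_restrict_of_ae_restrict_of_subset hsub hd] with s hs using hs.1
    have := lipschitz_ftc hf ht0 hd'
    rw [h0, sub_zero] at this
    exact this
  -- integrability of deriv f, dominated by |f|
  have hfabs_int : ∀ t, IntegrableOn (fun s => |f s|) (Ioc 0 t) volume :=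
    fun t => (hcont.abs.integrableOn_Ioc)
  have hderiv_int : ∀ t ∈ Icc 0 b, IntegrableOn (deriv f) (Ioc 0 t) volume := by
    rintro t ⟨ht0, htb⟩
    have hsub : Ioc 0 t ⊆ Ioc 0 b := Ioc_subset_Ioc_right htb
    refine Integrable.mono' (hfabs_int t) ((measurable_deriv f).aestronglyMeasurable) ?_
    filter_upwards [ae_restrict_of_ae_restrict_of_subset hsub hd] with s hs
    simpa [Real.norm_eq_abs] using hs.2
  -- the comparison function G
  set G : ℝ → ℝ := fun x => ∫ s in (0:ℝ)..x, |f s| with hG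
  have hGd : ∀ x, HasDerivAt G (|f x|) x := fun x =>
    (hcont.abs.integral_hasStrictDerivAt 0 x).hasDerivAt
  have hGnonneg : ∀ x, 0 ≤ x → 0 ≤ G x := by
    intro x hx
    rw [hG]
    simp only
    rw [intervalIntegral.integral_of_le hx]
    exact setIntegral_nonneg measurableSet_Ioc (fun s _ => abs_nonneg _)
  have hfleG : ∀ t ∈ Icc 0 b, |f t| ≤ G t := by
    rintro t ht
    obtain ⟨ht0, htb⟩ := ht
    rw [key t ⟨ht0, htb⟩]
    calc |∫ s in Ioc 0 t, deriv f s| ≤ ∫ s in Ioc 0 t, |deriv f s| := by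
          simpa [Real.norm_eq_abs] using
            norm_integral_le_integral_norm (μ := volume.restrict (Ioc 0 t)) (deriv f)
      _ ≤ ∫ s in Ioc 0 t, |f s| := by
          apply integral_mono_ae ((hderiv_int t ⟨ht0, htb⟩).abs) (hfabs_int t)
          have hsub : Ioc 0 t ⊆ Ioc 0 b := Ioc_subset_Ioc_right htb
          filter_upwards [ae_restrict_of_ae_restrict_of_subset hsub hd] with s hs using hs.2
      _ = G t := by rw [hG]; simp only; rw [intervalIntegral.integral_of_le ht0]
  -- Gronwall
  have hgron := norm_le_gronwallBound_of_norm_deriv_right_le (f := G) (f' := fun x => |f x|)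
    (δ := 0) (K := 1) (ε := 0) (a := 0) (b := b)
    (fun x _ => (hGd x).continuousAt.continuousWithinAt)
    (fun x _ => (hGd x).hasDerivWithinAt)
    (by simp [hG])
    (fun x hx => by
      have h1 : |f x| ≤ G x := hfleG x ⟨hx.1, hx.2.le⟩
      have h2 : G x = ‖G x‖ := (Real.norm_of_nonneg (hGnonneg x hx.1)).symm
      show ‖|f x|‖ ≤ 1 * ‖G x‖ + 0
      rw [Real.norm_eq_abs, abs_abs, one_mul, add_zero, ← h2]
      exact h1)
  have hGb : ‖G b‖ ≤ 0 := by
    have := hgron b ⟨hb, le_refl b⟩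
    simpa [gronwallBound_ε0_δ0] using this
  have : |f b| ≤ 0 := by
    have h1 := hfleG b ⟨hb, le_refl b⟩
    have h2 : G b ≤ 0 := le_trans (le_abs_self _) (by simpa [Real.norm_eq_abs] using hGb)
    linarith
  exact abs_nonpos_iff.1 (by linarith [abs_nonneg (f b)])

/-- Part C : every point of the graph is in the orbit. -/
lemma graph_subset_orbit (x : Fin 2 → ℝ) (hx : x 1 = x 0 * |x 0|) :
    InOrbit Yex (fun _ => 0) x := by
  set c : ℝ := if 0 ≤ x 0 then 1 else -1 with hc
  have hc1 : |c| = 1 := by rw [hc]; split_ifs <;> simp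
  have hcsq : c^2 = 1 := by rw [hc]; split_ifs <;> norm_num
  have hcx : c * |x 0| = x 0 := by
    rw [hc]; split_ifs with h
    · rw [abs_of_nonneg h]; ring
    · rw [abs_of_neg (lt_of_not_ge h)]; ring
  set T : ℝ := |x 0| with hT
  have hT0 : 0 ≤ T := abs_nonneg _
  set γ : ℝ → Fin 2 → ℝ := fun t => ![c * t, (c * t) * |c * t|] with hγ
  refine ⟨T, hT0, γ, ⟨⟨Real.toNNReal (1 + 2*T), ?_⟩, fun _ => ![c, 0], ?_⟩, ?_, ?_⟩
  · -- Lipschitz on Icc 0 T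
    rw [lipschitzOnWith_iff_dist_le_mul]
    intro s hs t ht
    rw [Real.coe_toNNReal _ (by positivity)]
    rw [dist_pi_le_iff (by positivity)]
    refine Fin.forall_fin_two.2 ⟨?_, ?_⟩
    all_goals simp only [hγ, Matrix.cons_val_zero, Matrix.cons_val_one, Matrix.head_cons,
      Real.dist_eq]
    · have h1 : |c * s - c * t| = |s - t| := by
        rw [show c*s - c*t = c*(s-t) by ring, abs_mul, hc1, one_mul]
      rw [h1]
      nlinarith [abs_nonneg (s - t), hT0]
    · have h2 := abs_mulAbs_sub (c*s) (c*t)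
      have h3 : |c*s| = |s| := by rw [abs_mul, hc1, one_mul]
      have h4 : |c*t| = |t| := by rw [abs_mul, hc1, one_mul]
      have h5 : |c*s - c*t| = |s - t| := by
        rw [show c*s - c*t = c*(s-t) by ring, abs_mul, hc1, one_mul]
      have h6 : |s| ≤ T := by rw [abs_of_nonneg hs.1]; exact hs.2
      have h7 : |t| ≤ T := by rw [abs_of_nonneg ht.1]; exact ht.2
      calc abs ((c*s)*|c*s| - (c*t)*|c*t|) ≤ (|c*s|+|c*t|)*|c*s-c*t| := h2
        _ = (|s|+|t|)*|s-t| := by rw [h3, h4, h5]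
        _ ≤ (1 + 2*T) * |s - t| := by nlinarith [abs_nonneg (s-t)]
  · -- ae conditions; in fact everywhere
    filter_upwards with t
    constructor
    · have : (![c, (0:ℝ)] 0)^2 + (![c, (0:ℝ)] 1)^2 = 1 := by simp [hcsq]
      rw [Fin.sum_univ_two, this, Real.sqrt_one]
    · rw [hasDerivAt_pi]
      refine Fin.forall_fin_two.2 ⟨?_, ?_⟩
      · have hd : HasDerivAt (fun t : ℝ => c * t) c t := by
          simpa using (hasDerivAt_id t).const_mul c
        refine hd.congr_deriv ?_
        rw [Fin.sum_univ_two]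
        simp [Yex, hγ]
      · have hd : HasDerivAt (fun t : ℝ => (c*t) * |c*t|) (2*|c*t| * c) t :=
          (hasDerivAt_mulAbs (c*t)).comp t (by simpa using (hasDerivAt_id t).const_mul c)
        refine hd.congr_deriv ?_
        rw [Fin.sum_univ_two]
        simp [Yex, hγ]
        ring
  · funext i
    fin_cases i <;> simp [hγ]
  · funext i
    fin_cases i <;> simp [hγ, hT]
    · exact hcx
    · rw [hcx]
      rw [hc1, one_mul]; exact hx.symm

/-- Part D : the orbit of the origin lies in the graph. -/
lemma orbit_subset_graph (y : Fin 2 → ℝ) (hy : InOrbit Yex (fun _ => 0) y) :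
    y 1 = y 0 * |y 0| := by
  obtain ⟨T, hT, γ, ⟨⟨L, hLip⟩, u, hae⟩, h0, hTy⟩ := hy
  -- the projection onto [0, T]
  set ρ : ℝ → ℝ := fun t => max 0 (min t T) with hρ
  have hρ_mem : ∀ t, ρ t ∈ Icc 0 T := fun t =>
    ⟨le_max_left _ _, max_le (by exact hT) (min_le_right _ _)⟩
  have hρ_id : ∀ t ∈ Icc 0 T, ρ t = t := fun t ht => by
    rw [hρ]; simp only; rw [min_eq_left ht.2, max_eq_right ht.1]
  have hρ_lip : ∀ s t, |ρ s - ρ t| ≤ |s - t| := by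
    intro s t
    calc |ρ s - ρ t| = |max (min s T) 0 - max (min t T) 0| := by
          rw [hρ]; simp only [max_comm]
      _ ≤ |min s T - min t T| := abs_max_sub_max_le_abs _ _ _
      _ ≤ max |s - t| |T - T| := abs_min_sub_min_le_max _ _ _ _
      _ = |s - t| := by simp
  have hLipρ : ∀ s t : ℝ, dist (γ (ρ s)) (γ (ρ t)) ≤ L * |ρ s - ρ t| := by
    intro s t
    have h1 := (lipschitzOnWith_iff_dist_le_mul.1 hLip) (ρ s) (hρ_mem s) (ρ t) (hρ_mem t)
    rwa [Real.dist_eq] at h1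
  have hLip' : ∀ s t : ℝ, dist (γ (ρ s)) (γ (ρ t)) ≤ L * |s - t| := fun s t =>
    (hLipρ s t).trans (mul_le_mul_of_nonneg_left (hρ_lip s t) (NNReal.coe_nonneg L))
  -- components
  have hcomp_lip : ∀ (i : Fin 2) (s t : ℝ), |γ (ρ s) i - γ (ρ t) i| ≤ L * |s - t| := by
    intro i s t
    have h2 := dist_le_pi_dist (γ (ρ s)) (γ (ρ t)) i
    rw [Real.dist_eq] at h2
    exact h2.trans (hLip' s t)
  have hρ0 : ρ 0 = 0 := hρ_id 0 ⟨le_refl 0, hT⟩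
  have hρT : ρ T = T := hρ_id T ⟨hT, le_refl T⟩
  set R : ℝ := L * T with hR
  have hbound : ∀ t, |γ (ρ t) 0| ≤ R := by
    intro t
    have h1 := (dist_le_pi_dist (γ (ρ t)) (γ (ρ 0)) 0).trans (hLipρ t 0)
    rw [Real.dist_eq, hρ0, h0] at h1
    simp only [sub_zero] at h1
    refine h1.trans ?_
    rw [hR]
    have h2 : |ρ t| ≤ T := by
      rw [abs_of_nonneg (hρ_mem t).1]; exact (hρ_mem t).2
    exact mul_le_mul_of_nonneg_left (by simpa using h2) (NNReal.coe_nonneg L)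
  -- the gap function
  set h : ℝ → ℝ := fun t => γ (ρ t) 1 - γ (ρ t) 0 * |γ (ρ t) 0| with hh
  have hLT0 : (0:ℝ) ≤ L := NNReal.coe_nonneg L
  have hR0 : 0 ≤ R := by rw [hR]; positivity
  have hlip_h : LipschitzWith (Real.toNNReal ((L:ℝ) + 2*R*L)) h := by
    apply LipschitzWith.of_dist_le_mul
    intro s t
    rw [Real.coe_toNNReal _ (by positivity), Real.dist_eq, Real.dist_eq, hh]
    simp only
    have h1 := hcomp_lip 1 s t
    have h0' := hcomp_lip 0 s t
    have h2 := abs_mulAbs_sub (γ (ρ s) 0) (γ (ρ t) 0)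
    have h3 : (|γ (ρ s) 0| + |γ (ρ t) 0|) * |γ (ρ s) 0 - γ (ρ t) 0| ≤ (2*R) * (L * |s - t|) := by
      apply mul_le_mul (by linarith [hbound s, hbound t]) h0' (abs_nonneg _) (by positivity)
    have h4 := abs_sub (γ (ρ s) 1 - γ (ρ t) 1)
      (γ (ρ s) 0 * |γ (ρ s) 0| - γ (ρ t) 0 * |γ (ρ t) 0|)
    calc |γ (ρ s) 1 - γ (ρ s) 0 * |γ (ρ s) 0| - (γ (ρ t) 1 - γ (ρ t) 0 * |γ (ρ t) 0|)|
        = |(γ (ρ s) 1 - γ (ρ t) 1) - (γ (ρ s) 0 * |γ (ρ s) 0| - γ (ρ t) 0 * |γ (ρ t) 0|)| := by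
          ring_nf
      _ ≤ |γ (ρ s) 1 - γ (ρ t) 1| + abs (γ (ρ s) 0 * |γ (ρ s) 0| - γ (ρ t) 0 * |γ (ρ t) 0|) :=
          abs_sub _ _
      _ ≤ L * |s - t| + (2*R) * (L * |s - t|) := by
          have := h2.trans h3
          linarith
      _ = ((L:ℝ) + 2*R*L) * |s - t| := by ring
  have hzero : h 0 = 0 := by
    rw [hh]
    simp only [hρ0, h0]
    norm_num
  -- a.e. derivative control
  have haeIoc : ∀ᵐ t ∂(volume.restrict (Ioc 0 T)),
      HasDerivAt h (deriv h t) t ∧ |deriv h t| ≤ |h t| := by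
    have h1 := ae_restrict_of_ae_restrict_of_subset Ioc_subset_Icc_self hae
    have h2 : ∀ᵐ t ∂(volume.restrict (Ioc 0 T)), t ≠ T := by
      rw [ae_iff]
      apply measure_mono_null (fun t (ht : ¬ t ≠ T) => show t ∈ ({T} : Set ℝ) from
        by simpa using not_not.1 ht)
      exact le_antisymm ((Measure.restrict_le_self).trans_eq rfl {T} |>.trans_eq
        (measure_singleton T)) zero_le
    have h3 := ae_restrict_mem (μ := volume) (measurableSet_Ioc : MeasurableSet (Ioc (0:ℝ) T))
    filter_upwards [h1, h2, h3] with t htd htne htmem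
    have htIoo : t ∈ Ioo 0 T := ⟨htmem.1, lt_of_le_of_ne htmem.2 htne⟩
    obtain ⟨hu, hγd⟩ := htd
    set v : Fin 2 → ℝ := ∑ j, u t j • Yex j (γ t) with hv
    have hcomp : ∀ i, HasDerivAt (fun s => γ s i) (v i) t := fun i =>
      hasDerivAt_pi.1 hγd i
    have hv0 : v 0 = u t 0 := by
      rw [hv, Fin.sum_univ_two]
      simp [Yex]
    have hv1 : v 1 = u t 0 * (2 * |γ t 0|) + u t 1 * abs (γ t 1 - γ t 0 * |γ t 0|) := by
      rw [hv, Fin.sum_univ_two]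
      simp [Yex]
    have hF : HasDerivAt (fun s => γ s 0 * |γ s 0|) (2 * |γ t 0| * v 0) t :=
      by have := (hasDerivAt_mulAbs (γ t 0)).comp t (hcomp 0); exact this
    have htilde : HasDerivAt (fun s => γ s 1 - γ s 0 * |γ s 0|)
        (u t 1 * abs (γ t 1 - γ t 0 * |γ t 0|)) t := by
      have := (hcomp 1).sub hF
      refine this.congr_deriv ?_
      rw [hv1, hv0]
      ring
    -- h agrees with this function near t
    have hev : (fun s => γ s 1 - γ s 0 * |γ s 0|) =ᶠ[𝓝 t] h := by
      filter_upwards [Ioo_mem_nhds htIoo.1 htIoo.2] with s hs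
      rw [hh]
      simp only [hρ_id s (Ioo_subset_Icc_self hs)]
    have hth : h t = γ t 1 - γ t 0 * |γ t 0| := by
      rw [hh]; simp only [hρ_id t (Ioo_subset_Icc_self htIoo)]
    have hd : HasDerivAt h (u t 1 * |h t|) t := by
      rw [hth]
      exact htilde.congr_of_eventuallyEq hev.symm
    have hu1 : |u t 1| ≤ 1 := by
      have hs0 : (0:ℝ) ≤ u t 0 ^ 2 + u t 1 ^ 2 := by positivity
      have hsum : u t 0 ^ 2 + u t 1 ^ 2 ≤ 1 := by
        rw [Fin.sum_univ_two] at hu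
        nlinarith [Real.sq_sqrt hs0, Real.sqrt_nonneg (u t 0 ^ 2 + u t 1 ^ 2)]
      nlinarith [sq_abs (u t 1), abs_nonneg (u t 1)]
    refine ⟨hd.deriv ▸ hd, ?_⟩
    rw [hd.deriv, abs_mul, abs_abs]
    exact mul_le_of_le_one_left (abs_nonneg _) hu1
  have hfinal := lipschitz_vanish hlip_h hT hzero haeIoc
  rw [hh] at hfinal
  simp only [hρT, hTy] at hfinal
  linarith [hfinal]

end Helpers

/-- Example: `Y₁, Y₂` are Lipschitz, `[Y₁,Y₂] = 0` a.e., and the orbit of the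
origin is the graph `{x₂ = x₁|x₁|}`, a one-dimensional `C^{1,1}` submanifold
(graph of the `C^1` function `s ↦ s|s|` with Lipschitz derivative). -/
theorem example_orbit_graph :
    LocallyLipschitz (Yex 0) ∧ LocallyLipschitz (Yex 1) ∧
    (∀ᵐ x ∂(volume : Measure (Fin 2 → ℝ)),
      (∀ i, DifferentiableAt ℝ (Yex i) x) ∧ vbracket (Yex 0) (Yex 1) x = 0) ∧
    {y : Fin 2 → ℝ | InOrbit Yex (fun _ => 0) y}
      = {x : Fin 2 → ℝ | x 1 = x 0 * |x 0|} ∧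
    ContDiff ℝ 1 (fun s : ℝ => s * |s|) ∧
    LipschitzWith 2 (deriv fun s : ℝ => s * |s|) := by
  refine ⟨partA0.locallyLipschitz, partA1, ?_, ?_, partE.1, partE.2⟩
  · have hbad : ∀ᵐ x ∂(volume : Measure (Fin 2 → ℝ)),
        ¬(x 0 = 0 ∨ x 1 - x 0 * |x 0| = 0) := by
      rw [ae_iff]
      refine measure_mono_null (fun x hx => ?_) null_bad
      exact not_not.1 hx
    filter_upwards [hbad] with x hx
    push_neg at hx
    obtain ⟨h1, h2⟩ := hx
    refine ⟨Fin.forall_fin_two.2 ⟨(hasFDerivAt_Yex0 h1).differentiableAt,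
      (hasFDerivAt_Yex1 h2).differentiableAt⟩, vbracket_zero h1 h2⟩
  · ext y
    simp only [Set.mem_setOf_eq]
    exact ⟨orbit_subset_graph y, graph_subset_orbit y⟩
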